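/- Let T = T_{a,b} + cφ with a, b, c ∈ ℝ, where T_{a,b} := (a+b)(−e₁₃₅ + e₁₄₆ + e₂₃₆ + e₂₄₅) + 2a(e₃₄₇ + e₁₂₇) + 4b·e₅₆₇. If a + b = c, then σ(T)ψ₁ = −7c·ψ₁ and σ(T)ψ₂ = −7c·ψ₂ (the same eigenvalue on both spinors). If 4(a+b) = −3c, then σ(T)ψ₁ = −7c·ψ₁ and σ(T)ψ₂ = +7c·ψ₂ (opposite eigenvalues ±7c). -/

import Mathlib

open Matrix BigOperators

noncomputable section

abbrev M8 : Type := Matrix (Fin 8) (Fin 8) ℝ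

/-- 2-forms on ℝ⁷ -/
abbrev Lam2 : Type := AlternatingMap ℝ (Fin 7 → ℝ) ℝ (Fin 2)

/-- 3-forms on ℝ⁷ -/
abbrev Lam3 : Type := AlternatingMap ℝ (Fin 7 → ℝ) ℝ (Fin 3)

/-- standard basis of ℝ⁷ -/
def u (i : Fin 7) : Fin 7 → ℝ := Pi.single i 1

/-- standard spinor basis ψ₁,…,ψ₈ (0-indexed) -/
def ψ (k : Fin 8) : Fin 8 → ℝ := Pi.single k 1

/-- E_{ij} : ψ_i ↦ ψ_j, ψ_j ↦ -ψ_i -/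
def EE (i j : Fin 8) : M8 := Matrix.single j i 1 - Matrix.single i j 1

/-- Clifford multiplication by e₁,…,e₇ (0-indexed) -/
def e : Fin 7 → M8 :=
  ![EE 0 7 + EE 1 6 - EE 2 5 - EE 3 4,
    -EE 0 6 + EE 1 7 + EE 2 4 - EE 3 5,
    -EE 0 5 + EE 1 4 - EE 2 7 + EE 3 6,
    -EE 0 4 - EE 1 5 - EE 2 6 - EE 3 7,
    -EE 0 2 - EE 1 3 + EE 4 6 + EE 5 7,
    EE 0 3 - EE 1 2 - EE 4 7 + EE 5 6,
    EE 0 1 - EE 2 3 - EE 4 5 + EE 6 7]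

def pick2 (i j : Fin 7) : (Fin 7 → ℝ) →ₗ[ℝ] (Fin 2 → ℝ) :=
  LinearMap.pi fun m => LinearMap.proj (![i, j] m)

def pick3 (i j k : Fin 7) : (Fin 7 → ℝ) →ₗ[ℝ] (Fin 3 → ℝ) :=
  LinearMap.pi fun m => LinearMap.proj (![i, j, k] m)

/-- the 2-form e_i ∧ e_j -/
def w2 (i j : Fin 7) : Lam2 :=
  (Matrix.detRowAlternating : AlternatingMap ℝ (Fin 2 → ℝ) ℝ (Fin 2)).compLinearMap (pick2 i j)

/-- the 3-form e_i ∧ e_j ∧ e_k -/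
def w3 (i j k : Fin 7) : Lam3 :=
  (Matrix.detRowAlternating : AlternatingMap ℝ (Fin 3 → ℝ) ℝ (Fin 3)).compLinearMap (pick3 i j k)

/-- Clifford action of a 2-form -/
def σ2 (ω : Lam2) : M8 :=
  ∑ i : Fin 7, ∑ j : Fin 7, if i < j then ω ![u i, u j] • (e i * e j) else 0

/-- Clifford action of a 3-form -/
def σ3 (T : Lam3) : M8 :=
  ∑ i : Fin 7, ∑ j : Fin 7, ∑ k : Fin 7,
    if i < j ∧ j < k then T ![u i, u j, u k] • (e i * e j * e k) else 0

/-- the skew-symmetric 7×7 matrix A_ω associated to a 2-form ω -/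
def A2 (ω : Lam2) : Matrix (Fin 7) (Fin 7) ℝ :=
  ∑ i : Fin 7, ∑ j : Fin 7,
    if i < j then ω ![u i, u j] •
      (Matrix.single j i (1 : ℝ) - Matrix.single i j 1) else 0

/-- T is ω-invariant: the natural action of the 2-form ω on the 3-form T vanishes -/
def inv3 (ω : Lam2) (T : Lam3) : Prop :=
  ∀ X Y Z : Fin 7 → ℝ,
    T ![A2 ω *ᵥ X, Y, Z] + T ![X, A2 ω *ᵥ Y, Z] + T ![X, Y, A2 ω *ᵥ Z] = 0

/-- the standard G₂ 3-form φ = e₁₂₇+e₁₃₅−e₁₄₆−e₂₃₆−e₂₄₅+e₃₄₇+e₅₆₇ -/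
def φf : Lam3 :=
  w3 0 1 6 + w3 0 2 4 - w3 0 3 5 - w3 1 2 5 - w3 1 3 4 + w3 2 3 6 + w3 4 5 6

/-- T_{a,b} := (a+b)(−e₁₃₅+e₁₄₆+e₂₃₆+e₂₄₅) + 2a(e₃₄₇+e₁₂₇) + 4b e₅₆₇ -/
def Tab (a b : ℝ) : Lam3 :=
  (a + b) • (-w3 0 2 4 + w3 0 3 5 + w3 1 2 5 + w3 1 3 4)
    + (2 * a) • (w3 2 3 6 + w3 0 1 6) + (4 * b) • w3 4 5 6

lemma detRow_eq (M : Matrix (Fin 3) (Fin 3) ℝ) :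
    (Matrix.detRowAlternating : AlternatingMap ℝ (Fin 3 → ℝ) ℝ (Fin 3)) M = M.det := rfl

lemma w3_apply (p q r : Fin 7) (x y z : Fin 7 → ℝ) :
    w3 p q r ![x,y,z] =
      x p * y q * z r - x p * y r * z q - x q * y p * z r
        + x q * y r * z p + x r * y p * z q - x r * y q * z p := by
  simp [w3, pick3, detRow_eq, Matrix.det_fin_three]
  erw [detRow_eq, Matrix.det_fin_three]
  simp

lemma EE_mulVec (i j : Fin 8) (v : Fin 8 → ℝ) :
    EE i j *ᵥ v = Pi.single j (v i) - Pi.single i (v j) := by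
  funext x
  simp [EE, Matrix.sub_mulVec, Matrix.single_mulVec, Pi.single_apply,
    Function.update_apply]

lemma e_def0 : e 0 = EE 0 7 + EE 1 6 - EE 2 5 - EE 3 4 := rfl
lemma e_def1 : e 1 = -EE 0 6 + EE 1 7 + EE 2 4 - EE 3 5 := rfl
lemma e_def2 : e 2 = -EE 0 5 + EE 1 4 - EE 2 7 + EE 3 6 := rfl
lemma e_def3 : e 3 = -EE 0 4 - EE 1 5 - EE 2 6 - EE 3 7 := rfl
lemma e_def4 : e 4 = -EE 0 2 - EE 1 3 + EE 4 6 + EE 5 7 := rfl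
lemma e_def5 : e 5 = EE 0 3 - EE 1 2 - EE 4 7 + EE 5 6 := rfl
lemma e_def6 : e 6 = EE 0 1 - EE 2 3 - EE 4 5 + EE 6 7 := rfl

set_option maxHeartbeats 4000000 in
lemma key0 (a b c : ℝ) :
    σ3 (Tab a b + c • φf) *ᵥ ψ 0 = (-7*c) • ψ 0 := by
  simp only [σ3, Fin.sum_univ_seven]
  simp (config := { decide := true }) only [if_true, if_false, reduceIte]
  simp (config := { decide := true }) only [Tab, φf, w3_apply, u, Pi.single_apply,
    AlternatingMap.add_apply, AlternatingMap.smul_apply, AlternatingMap.neg_apply,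
    AlternatingMap.sub_apply, smul_eq_mul, mul_zero, mul_one, zero_smul, add_zero, zero_add,
    sub_zero, zero_sub, neg_zero, mul_neg, neg_neg]
  simp only [ite_true, ite_false, mul_zero, mul_one, zero_mul, one_mul, sub_zero, zero_sub,
    add_zero, zero_add, neg_zero, zero_smul, smul_zero, neg_neg, mul_neg, neg_mul]
  simp only [e_def0, e_def1, e_def2, e_def3, e_def4, e_def5, e_def6, ψ]
  simp (config := { decide := true }) only [Matrix.add_mulVec, Matrix.sub_mulVec,
    Matrix.neg_mulVec, Matrix.smul_mulVec, ← Matrix.mulVec_mulVec, EE_mulVec,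
    Pi.sub_apply, Pi.add_apply, Pi.neg_apply, Pi.single_apply]
  funext x
  fin_cases x <;>
    simp (config := { decide := true }) [Pi.single_apply] <;> ring

set_option maxHeartbeats 4000000 in
lemma key1 (a b c : ℝ) :
    σ3 (Tab a b + c • φf) *ᵥ ψ 1 = (-8*(a+b)+c) • ψ 1 := by
  simp only [σ3, Fin.sum_univ_seven]
  simp (config := { decide := true }) only [if_true, if_false, reduceIte]
  simp (config := { decide := true }) only [Tab, φf, w3_apply, u, Pi.single_apply,
    AlternatingMap.add_apply, AlternatingMap.smul_apply, AlternatingMap.neg_apply,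
    AlternatingMap.sub_apply, smul_eq_mul, mul_zero, mul_one, zero_smul, add_zero, zero_add,
    sub_zero, zero_sub, neg_zero, mul_neg, neg_neg]
  simp only [ite_true, ite_false, mul_zero, mul_one, zero_mul, one_mul, sub_zero, zero_sub,
    add_zero, zero_add, neg_zero, zero_smul, smul_zero, neg_neg, mul_neg, neg_mul]
  simp only [e_def0, e_def1, e_def2, e_def3, e_def4, e_def5, e_def6, ψ]
  simp (config := { decide := true }) only [Matrix.add_mulVec, Matrix.sub_mulVec,
    Matrix.neg_mulVec, Matrix.smul_mulVec, ← Matrix.mulVec_mulVec, EE_mulVec,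
    Pi.sub_apply, Pi.add_apply, Pi.neg_apply, Pi.single_apply]
  funext x
  fin_cases x <;>
    simp (config := { decide := true }) [Pi.single_apply] <;> ring

/-- eigenvalues of σ(T_{a,b} + cφ) on ψ₁, ψ₂ in the two admissible cases. -/
theorem stmt_9 (a b c : ℝ) :
    (a + b = c →
      σ3 (Tab a b + c • φf) *ᵥ ψ 0 = (-7 * c) • ψ 0 ∧
      σ3 (Tab a b + c • φf) *ᵥ ψ 1 = (-7 * c) • ψ 1) ∧
    (4 * (a + b) = -3 * c →
      σ3 (Tab a b + c • φf) *ᵥ ψ 0 = (-7 * c) • ψ 0 ∧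
      σ3 (Tab a b + c • φf) *ᵥ ψ 1 = (7 * c) • ψ 1) := by
  refine ⟨fun h => ⟨key0 a b c, ?_⟩, fun h => ⟨key0 a b c, ?_⟩⟩
  · have : (-7 * c : ℝ) = -8*(a+b)+c := by linarith
    rw [this, key1]
  · have : (7 * c : ℝ) = -8*(a+b)+c := by linarith
    rw [this, key1]
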